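/- Let Φ be a root system with positive roots Φ⁺, ρ the half-sum of positive roots, and E ⊆ Φ⁺ a subset. If ρ − Σ_{α∈E} α is regular and w is the unique Weyl group element such that w⁻¹(ρ − Σ_{α∈E} α) is regular dominant, then w⁻¹(ρ − Σ_{α∈E} α) = ρ and E = Φ(w) := {α ∈ Φ⁺ : w⁻¹α ∈ Φ⁻}. -/

import Mathlib

open RealInnerProductSpace

/-- The reflection `s_α` in the hyperplane orthogonal to `α`. -/
noncomputable def sref {V : Type*} [NormedAddCommGroup V] [InnerProductSpace ℝ V]
    [FiniteDimensional ℝ V] (α : V) : V ≃ₗᵢ[ℝ] V :=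
  Submodule.reflection ((ℝ ∙ α)ᗮ)

/-- The pairing `⟨lam, α^∨⟩ = 2⟪lam, α⟫/⟪α, α⟫` of a weight `lam` with the coroot of `α`. -/
noncomputable def cpair {V : Type*} [NormedAddCommGroup V] [InnerProductSpace ℝ V]
    (α lam : V) : ℝ := 2 * ⟪lam, α⟫ / ⟪α, α⟫

/-- The Weyl group of `Φ`: the subgroup of linear isometries generated by the reflections in
the roots. -/
noncomputable def weylGroup {V : Type*} [NormedAddCommGroup V] [InnerProductSpace ℝ V]
    [FiniteDimensional ℝ V] (Φ : Finset V) : Subgroup (V ≃ₗᵢ[ℝ] V) :=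
  Subgroup.closure {g | ∃ α ∈ Φ, g = sref α}

section MacdonaldAux

set_option linter.unusedSectionVars false

variable {V : Type*} [NormedAddCommGroup V] [InnerProductSpace ℝ V] [FiniteDimensional ℝ V]

theorem sref_apply (α x : V) : sref α x = x - cpair α x • α := by
  rw [sref, Submodule.reflection_orthogonal_apply, Submodule.reflection_singleton_apply, cpair]
  rw [real_inner_self_eq_norm_sq, real_inner_comm]
  simp only [RCLike.ofReal_real_eq_id, id]
  rw [neg_sub, sub_eq_sub_iff_sub_eq_sub, sub_self, ← Nat.cast_smul_eq_nsmul ℝ, smul_smul,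
    ← sub_smul]
  symm
  rw [smul_eq_zero]
  left
  push_cast
  ring

theorem sref_inv (α : V) : (sref α)⁻¹ = sref α := Submodule.reflection_inv

theorem cpair_eq (α x : V) : cpair α x = (2 / ⟪α, α⟫) * ⟪x, α⟫ := by
  rw [cpair]; ring

theorem cpair_sub (α x y : V) : cpair α (x - y) = cpair α x - cpair α y := by
  simp [cpair_eq, inner_sub_left]; ring

theorem cpair_smul (α : V) (c : ℝ) (x : V) : cpair α (c • x) = c * cpair α x := by
  simp [cpair_eq, inner_smul_left]; ring

theorem cpair_sum (α : V) {ι : Type*} (s : Finset ι) (f : ι → V) :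
    cpair α (∑ i ∈ s, f i) = ∑ i ∈ s, cpair α (f i) := by
  simp [cpair_eq, sum_inner, Finset.mul_sum]

theorem cpair_self (α : V) (h : α ≠ 0) : cpair α α = 2 := by
  rw [cpair, mul_div_assoc, div_self, mul_one]
  exact fun hc => h ((inner_self_eq_zero (𝕜 := ℝ)).mp hc)

theorem sref_self (α : V) (h : α ≠ 0) : sref α α = -α := by
  rw [sref_apply, cpair_self α h, two_smul]; abel

theorem weyl_maps_roots (Φ : Finset V)
    (hrefl : ∀ α ∈ Φ, ∀ β ∈ Φ, sref α β ∈ Φ)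
    {w : V ≃ₗᵢ[ℝ] V} (hw : w ∈ weylGroup Φ) :
    (∀ β ∈ Φ, w β ∈ Φ) ∧ (∀ β ∈ Φ, w⁻¹ β ∈ Φ) := by
  induction hw using Subgroup.closure_induction with
  | mem g hg =>
      obtain ⟨α, hα, rfl⟩ := hg
      exact ⟨hrefl α hα, by rw [sref_inv]; exact hrefl α hα⟩
  | one => simp
  | mul g h _ _ hg hh =>
      refine ⟨fun β hβ => hg.1 _ (hh.1 β hβ), fun β hβ => ?_⟩
      rw [mul_inv_rev]
      exact hh.2 _ (hg.2 β hβ)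
  | inv g _ hg => exact ⟨by simpa using hg.2, by simpa using hg.1⟩

open Finset in
theorem closure_rep (Δ : Finset V) {x : V} (hx : x ∈ AddSubmonoid.closure (Δ : Set V)) :
    ∃ c : V → ℕ, x = ∑ γ ∈ Δ, (c γ : ℝ) • γ := by
  classical
  induction hx using AddSubmonoid.closure_induction with
  | mem γ hγ =>
      refine ⟨fun η => if η = γ then 1 else 0, ?_⟩
      rw [show ∑ η ∈ Δ, ((if η = γ then (1:ℕ) else 0 : ℕ) : ℝ) • η
          = ∑ η ∈ Δ, (if η = γ then η else 0) from Finset.sum_congr rfl (by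
            intro η _; split <;> simp)]
      rw [Finset.sum_ite_eq' Δ γ (fun η => η), if_pos (by exact_mod_cast hγ)]
  | zero => exact ⟨fun _ => 0, by simp⟩
  | add a b _ _ ha hb =>
      obtain ⟨c, rfl⟩ := ha
      obtain ⟨d, rfl⟩ := hb
      exact ⟨fun η => c η + d η, by push_cast; simp [add_smul, Finset.sum_add_distrib]⟩

theorem lindep_coeff (Δ : Finset V)
    (hΔind : LinearIndependent ℝ (Subtype.val : {x : V // x ∈ Δ} → V))
    (f : V → ℝ) (h : ∑ γ ∈ Δ, f γ • γ = 0) : ∀ γ ∈ Δ, f γ = 0 := by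
  intro γ hγ
  have h2 : ∑ i : {x : V // x ∈ Δ}, f i.val • i.val = 0 := by
    rw [← h]; exact Finset.sum_coe_sort Δ (fun γ => f γ • γ)
  exact Fintype.linearIndependent_iff.mp hΔind (fun i => f i.val) h2 ⟨γ, hγ⟩

theorem mem_closure_neg_mem (Δ : Finset V)
    (hΔind : LinearIndependent ℝ (Subtype.val : {x : V // x ∈ Δ} → V))
    {x : V} (hx : x ∈ AddSubmonoid.closure (Δ : Set V))
    (hx' : -x ∈ AddSubmonoid.closure (Δ : Set V)) : x = 0 := by
  obtain ⟨c, hc⟩ := closure_rep Δ hx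
  obtain ⟨d, hd⟩ := closure_rep Δ hx'
  have h : ∑ γ ∈ Δ, ((c γ : ℝ) + d γ) • γ = 0 := by
    simp only [add_smul, Finset.sum_add_distrib, ← hc, ← hd]
    abel
  have := lindep_coeff Δ hΔind _ h
  rw [hc]
  refine Finset.sum_eq_zero fun γ hγ => ?_
  have h1 := this γ hγ
  have hc0 : (c γ : ℝ) = 0 := by
    have hcnn : (0:ℝ) ≤ (c γ : ℝ) := Nat.cast_nonneg _
    have hdnn : (0:ℝ) ≤ (d γ : ℝ) := Nat.cast_nonneg _
    linarith
  rw [hc0, zero_smul]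

theorem closure_inner_pos (Δ : Finset V) {x : V}
    (hx : x ∈ AddSubmonoid.closure (Δ : Set V)) (hx0 : x ≠ 0) :
    ∃ γ ∈ Δ, 0 < ⟪x, γ⟫ := by
  by_contra hcon
  push_neg at hcon
  obtain ⟨c, hc⟩ := closure_rep Δ hx
  have h2 : ⟪x, x⟫ = ⟪x, ∑ γ ∈ Δ, (c γ : ℝ) • γ⟫ := by rw [← hc]
  have : ⟪x, x⟫ ≤ 0 := by
    rw [h2, inner_sum]
    refine Finset.sum_nonpos fun γ hγ => ?_
    rw [real_inner_smul_right]
    exact mul_nonpos_of_nonneg_of_nonpos (Nat.cast_nonneg _) (hcon γ hγ)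
  exact hx0 (real_inner_self_nonpos.mp this)

theorem srefγ_mem (Φ Δ Φpos : Finset V)
    (h0 : (0 : V) ∉ Φ)
    (hrefl : ∀ α ∈ Φ, ∀ β ∈ Φ, sref α β ∈ Φ)
    (hred : ∀ α ∈ Φ, ∀ t : ℝ, t • α ∈ Φ → t = 1 ∨ t = -1)
    (hΔΦ : (Δ : Set V) ⊆ Φ)
    (hΔind : LinearIndependent ℝ (Subtype.val : {x : V // x ∈ Δ} → V))
    (hΦpos : ∀ β : V, β ∈ Φpos ↔ β ∈ Φ ∧ β ∈ AddSubmonoid.closure (Δ : Set V))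
    (hΔgen : ∀ β ∈ Φ, β ∈ Φpos ∨ -β ∈ Φpos)
    {γ : V} (hγ : γ ∈ Δ) {δ : V} (hδ : δ ∈ Φpos) (hδγ : δ ≠ γ) :
    sref γ δ ∈ Φpos ∧ sref γ δ ≠ γ := by
  classical
  have hγΦ : γ ∈ Φ := hΔΦ hγ
  obtain ⟨hδΦ, hδcl⟩ := (hΦpos δ).mp hδ
  have hsΦ : sref γ δ ∈ Φ := hrefl γ hγΦ δ hδΦ
  obtain ⟨c, hc⟩ := closure_rep Δ hδcl
  have hmem : sref γ δ ∈ Φpos := by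
    by_cases hcase : ∀ η ∈ Δ, η ≠ γ → c η = 0
    · -- δ is a multiple of γ, impossible unless δ = γ
      exfalso
      have hδγ' : δ = (c γ : ℝ) • γ := by
        rw [hc]
        rw [Finset.sum_eq_single γ]
        · intro η hη hηγ
          rw [hcase η hη hηγ]
          simp
        · intro h; exact absurd hγ h
      have := hred γ hγΦ (c γ : ℝ) (by rw [← hδγ']; exact hδΦ)
      rcases this with h1 | h1
      · exact hδγ (by rw [hδγ', h1, one_smul])
      · have : (0:ℝ) ≤ (c γ : ℝ) := Nat.cast_nonneg _
        rw [h1] at this; linarith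
    · push_neg at hcase
      obtain ⟨η₀, hη₀Δ, hη₀γ, hη₀c⟩ := hcase
      rcases hΔgen _ hsΦ with h | h
      · exact h
      · exfalso
        obtain ⟨hnΦ, hncl⟩ := (hΦpos _).mp h
        obtain ⟨d, hd⟩ := closure_rep Δ hncl
        set m := cpair γ δ with hm
        have key : ∑ η ∈ Δ, (((c η : ℝ) + d η) - (if η = γ then m else 0)) • η = 0 := by
          simp only [sub_smul, add_smul, Finset.sum_sub_distrib, Finset.sum_add_distrib]
          rw [show ∑ η ∈ Δ, (if η = γ then m else 0) • η
              = ∑ η ∈ Δ, (if η = γ then m • η else 0) from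
            Finset.sum_congr rfl (by intro η _; split <;> simp)]
          rw [Finset.sum_ite_eq' Δ γ (fun η => m • η), if_pos hγ]
          rw [← hc, ← hd]
          have : -(sref γ δ) = -(δ - m • γ) := by rw [sref_apply]
          rw [this]
          abel
        have := lindep_coeff Δ hΔind _ key η₀ hη₀Δ
        rw [if_neg hη₀γ, sub_zero] at this
        have h1 : (0:ℝ) ≤ (c η₀ : ℝ) := Nat.cast_nonneg _
        have h2 : (0:ℝ) ≤ (d η₀ : ℝ) := Nat.cast_nonneg _
        have h3 : (c η₀ : ℝ) ≠ 0 := Nat.cast_ne_zero.mpr hη₀c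
        have h4 : (0:ℝ) < (c η₀ : ℝ) := lt_of_le_of_ne h1 (Ne.symm h3)
        linarith
  refine ⟨hmem, fun heq => ?_⟩
  have hγ0 : γ ≠ 0 := fun h => h0 (h ▸ hγΦ)
  have hδeq : δ = -γ := by
    have h1 : sref γ (sref γ δ) = δ := Submodule.reflection_reflection _ δ
    rw [heq, sref_self γ hγ0] at h1
    exact h1.symm
  have : δ = 0 := mem_closure_neg_mem Δ hΔind hδcl (by rw [hδeq, neg_neg]; exact AddSubmonoid.subset_closure hγ)
  rw [this] at hδΦ
  exact h0 hδΦ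

theorem cpair_rho_simple (Φ Δ Φpos : Finset V)
    (h0 : (0 : V) ∉ Φ)
    (hrefl : ∀ α ∈ Φ, ∀ β ∈ Φ, sref α β ∈ Φ)
    (hred : ∀ α ∈ Φ, ∀ t : ℝ, t • α ∈ Φ → t = 1 ∨ t = -1)
    (hΔΦ : (Δ : Set V) ⊆ Φ)
    (hΔind : LinearIndependent ℝ (Subtype.val : {x : V // x ∈ Δ} → V))
    (hΦpos : ∀ β : V, β ∈ Φpos ↔ β ∈ Φ ∧ β ∈ AddSubmonoid.closure (Δ : Set V))
    (hΔgen : ∀ β ∈ Φ, β ∈ Φpos ∨ -β ∈ Φpos)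
    (ρ : V) (hρ : ρ = (2 : ℝ)⁻¹ • ∑ β ∈ Φpos, β)
    {γ : V} (hγ : γ ∈ Δ) : cpair γ ρ = 1 := by
  classical
  have hγΦ : γ ∈ Φ := hΔΦ hγ
  have hγ0 : γ ≠ 0 := fun h => h0 (h ▸ hγΦ)
  have hγpos : γ ∈ Φpos := (hΦpos γ).mpr ⟨hγΦ, AddSubmonoid.subset_closure hγ⟩
  have herase : ∑ β ∈ Φpos.erase γ, sref γ β = ∑ β ∈ Φpos.erase γ, β := by
    refine Finset.sum_nbij' (fun β => sref γ β) (fun β => sref γ β) ?_ ?_ ?_ ?_ ?_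
    · intro β hβ
      obtain ⟨hβγ, hβpos⟩ := Finset.mem_erase.mp hβ
      obtain ⟨h1, h2⟩ := srefγ_mem Φ Δ Φpos h0 hrefl hred hΔΦ hΔind hΦpos hΔgen hγ hβpos hβγ
      exact Finset.mem_erase.mpr ⟨h2, h1⟩
    · intro β hβ
      obtain ⟨hβγ, hβpos⟩ := Finset.mem_erase.mp hβ
      obtain ⟨h1, h2⟩ := srefγ_mem Φ Δ Φpos h0 hrefl hred hΔΦ hΔind hΦpos hΔgen hγ hβpos hβγ
      exact Finset.mem_erase.mpr ⟨h2, h1⟩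
    · intro β _; exact Submodule.reflection_reflection _ β
    · intro β _; exact Submodule.reflection_reflection _ β
    · intro β _; rfl
  have hsum : ∑ β ∈ Φpos, sref γ β = (∑ β ∈ Φpos, β) - (γ + γ) := by
    rw [← Finset.add_sum_erase _ _ hγpos, ← Finset.add_sum_erase _ (fun β => β) hγpos,
      herase, sref_self γ hγ0]
    abel
  have hsρ : sref γ ρ = ρ - γ := by
    rw [hρ, map_smul, map_sum, hsum, smul_sub]
    congr 1
    rw [show γ + γ = (2:ℝ) • γ from (two_smul ℝ γ).symm, smul_smul]
    norm_num
  rw [sref_apply] at hsρ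
  have : cpair γ ρ • γ = (1:ℝ) • γ := by
    rw [one_smul]
    have h2 := sub_right_injective hsρ
    exact h2
  exact smul_left_injective ℝ hγ0 this

end MacdonaldAux

/-- (Macdonald's lemma.)  Let `Φ` be a root system with positive roots `Φ⁺`, `ρ` the half-sum
of positive roots, and `E ⊆ Φ⁺`.  If `ρ - Σ_{α ∈ E} α` is regular and `w` is the (unique)
Weyl group element such that `w⁻¹(ρ - Σ_{α ∈ E} α)` is regular dominant, then
`w⁻¹(ρ - Σ_{α ∈ E} α) = ρ` and `E = Φ(w) = {α ∈ Φ⁺ : w⁻¹ α ∈ Φ⁻}`. -/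
theorem rho_minus_sum_regular
    {V : Type*} [NormedAddCommGroup V] [InnerProductSpace ℝ V] [FiniteDimensional ℝ V]
    (Φ Δ Φpos : Finset V)
    -- root system axioms
    (h0 : (0 : V) ∉ Φ)
    (hspan : Submodule.span ℝ (Φ : Set V) = ⊤)
    (hrefl : ∀ α ∈ Φ, ∀ β ∈ Φ, sref α β ∈ Φ)
    (hint : ∀ α ∈ Φ, ∀ β ∈ Φ, ∃ z : ℤ, cpair α β = z)
    (hred : ∀ α ∈ Φ, ∀ t : ℝ, t • α ∈ Φ → t = 1 ∨ t = -1)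
    -- Δ is a system of simple roots, with positive roots Φpos
    (hΔΦ : (Δ : Set V) ⊆ Φ)
    (hΔind : LinearIndependent ℝ (Subtype.val : {x : V // x ∈ Δ} → V))
    (hΦpos : ∀ β : V, β ∈ Φpos ↔ β ∈ Φ ∧ β ∈ AddSubmonoid.closure (Δ : Set V))
    (hΔgen : ∀ β ∈ Φ, β ∈ Φpos ∨ -β ∈ Φpos)
    -- ρ, the half-sum of the positive roots
    (ρ : V) (hρ : ρ = (2 : ℝ)⁻¹ • ∑ β ∈ Φpos, β)
    -- E is a subset of the positive roots
    (E : Finset V) (hE : E ⊆ Φpos)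
    -- ρ - Σ_{α ∈ E} α is regular
    (hregμ : ∀ β ∈ Φ, cpair β (ρ - ∑ α ∈ E, α) ≠ 0)
    -- w is a Weyl group element with w⁻¹(ρ - Σ_{α ∈ E} α) regular dominant
    (w : V ≃ₗᵢ[ℝ] V) (hw : w ∈ weylGroup Φ)
    (hdom : ∀ γ ∈ Δ, 0 ≤ cpair γ (w⁻¹ (ρ - ∑ α ∈ E, α)))
    (hregw : ∀ β ∈ Φ, cpair β (w⁻¹ (ρ - ∑ α ∈ E, α)) ≠ 0) :
    w⁻¹ (ρ - ∑ α ∈ E, α) = ρ ∧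
    (E : Set V) = {β : V | β ∈ Φpos ∧ -(w⁻¹ β) ∈ Φpos} := by
  classical
  set lam := w⁻¹ (ρ - ∑ α ∈ E, α) with hlamdef
  obtain ⟨hW, hWinv⟩ := weyl_maps_roots Φ hrefl hw
  have hposΦ : ∀ β ∈ Φpos, β ∈ Φ := fun β hβ => ((hΦpos β).mp hβ).1
  have hposcl : ∀ β ∈ Φpos, β ∈ AddSubmonoid.closure (Δ : Set V) :=
    fun β hβ => ((hΦpos β).mp hβ).2
  have posneg : ∀ β, β ∈ Φpos → -β ∈ Φpos → False := by
    intro β h1 h2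
    have hβ0 : β = 0 := mem_closure_neg_mem Δ hΔind (hposcl β h1) (hposcl _ h2)
    exact h0 (hβ0 ▸ hposΦ β h1)
  -- the sign-adjusted image of a positive root under w⁻¹, and its inverse
  set g : V → V := fun β => if w⁻¹ β ∈ Φpos then w⁻¹ β else -(w⁻¹ β) with hgdef
  set g' : V → V := fun δ => if w δ ∈ Φpos then w δ else -(w δ) with hg'def
  have hgmem : ∀ β ∈ Φpos, g β ∈ Φpos := by
    intro β hβ
    simp only [hgdef]
    split
    · assumption
    · rcases hΔgen _ (hWinv β (hposΦ β hβ)) with h | h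
      · exact absurd h ‹¬ _›
      · exact h
  have hg'mem : ∀ δ ∈ Φpos, g' δ ∈ Φpos := by
    intro δ hδ
    simp only [hg'def]
    split
    · assumption
    · rcases hΔgen _ (hW δ (hposΦ δ hδ)) with h | h
      · exact absurd h ‹¬ _›
      · exact h
  have hwinv : ∀ x : V, w (w⁻¹ x) = x := fun x => w.apply_symm_apply x
  have hwinv' : ∀ x : V, w⁻¹ (w x) = x := fun x => w.symm_apply_apply x
  have hg'g : ∀ β ∈ Φpos, g' (g β) = β := by
    intro β hβ
    simp only [hgdef, hg'def]
    by_cases h : w⁻¹ β ∈ Φpos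
    · rw [if_pos h, hwinv, if_pos hβ]
    · rw [if_neg h, map_neg, hwinv]
      rw [if_neg (fun hc => posneg β hβ hc), neg_neg]
  have hgg' : ∀ δ ∈ Φpos, g (g' δ) = δ := by
    intro δ hδ
    simp only [hgdef, hg'def]
    by_cases h : w δ ∈ Φpos
    · rw [if_pos h, hwinv']  -- w⁻¹ (w δ) = δ
      rw [if_pos hδ]
    · rw [if_neg h, map_neg, hwinv', if_neg (fun hc => posneg δ hδ hc), neg_neg]
  have hgsum : ∑ β ∈ Φpos, g β = ∑ β ∈ Φpos, β :=
    Finset.sum_nbij' g g' hgmem hg'mem hg'g hgg' (fun β _ => rfl)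
  -- signs
  set d : V → ℝ := fun β => (if w⁻¹ β ∈ Φpos then (1:ℝ) else -1) * (if β ∈ E then (-1:ℝ) else 1)
    with hddef
  have hd1 : ∀ β, d β = 1 ∨ d β = -1 := by
    intro β
    simp only [hddef]
    split <;> split <;> norm_num
  -- lam as a signed half-sum
  have hlam1 : lam = ∑ β ∈ Φpos, ((2:ℝ)⁻¹ * d β) • g β := by
    have h1 : lam = (2:ℝ)⁻¹ • ∑ β ∈ Φpos, w⁻¹ β - ∑ β ∈ E, w⁻¹ β := by
      rw [hlamdef, map_sub, hρ, map_smul, map_sum, map_sum]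
    have h2 : ∑ β ∈ E, w⁻¹ β = ∑ β ∈ Φpos, (if β ∈ E then w⁻¹ β else 0) := by
      rw [Finset.sum_ite_mem, Finset.inter_eq_right.mpr hE]
    rw [h1, h2, Finset.smul_sum, ← Finset.sum_sub_distrib]
    refine Finset.sum_congr rfl fun β hβ => ?_
    simp only [hddef, hgdef]
    by_cases hp : w⁻¹ β ∈ Φpos <;> by_cases he : β ∈ E <;>
      simp only [if_pos, if_neg, hp, he, if_true, if_false, ite_true, ite_false] <;> module
  set M : Finset V := Φpos.filter (fun β => d β = -1) with hMdef
  have hMpos : M ⊆ Φpos := Finset.filter_subset _ _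
  set F : Finset V := M.image g with hFdef
  have hFpos : ∀ δ ∈ F, δ ∈ Φpos := by
    intro δ hδ
    obtain ⟨β, hβ, rfl⟩ := Finset.mem_image.mp hδ
    exact hgmem β (hMpos hβ)
  have hFsum : ∑ δ ∈ F, δ = ∑ β ∈ M, g β := by
    rw [hFdef]
    refine Finset.sum_image ?_
    intro x hx y hy hxy
    rw [← hg'g x (hMpos hx), ← hg'g y (hMpos hy), hxy]
  have hlamF : lam = ρ - ∑ δ ∈ F, δ := by
    rw [hlam1, hFsum]
    have : ∀ β ∈ Φpos, ((2:ℝ)⁻¹ * d β) • g β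
        = (2:ℝ)⁻¹ • g β - (if β ∈ M then g β else 0) := by
      intro β hβ
      by_cases hm : β ∈ M
      · have hd : d β = -1 := (Finset.mem_filter.mp hm).2
        rw [if_pos hm, hd]
        module
      · have hd : d β = 1 := by
          rcases hd1 β with h | h
          · exact h
          · exact absurd (Finset.mem_filter.mpr ⟨hβ, h⟩) hm
        rw [if_neg hm, hd]
        module
    rw [Finset.sum_congr rfl this, Finset.sum_sub_distrib, ← Finset.smul_sum, hgsum, ← hρ]
    congr 1
    rw [Finset.sum_ite_mem, Finset.inter_eq_right.mpr hMpos]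
  -- F must be empty
  have hFempty : F = ∅ := by
    by_contra hne
    obtain ⟨δ₀, hδ₀⟩ := Finset.nonempty_iff_ne_empty.mpr hne
    have hσcl : (∑ δ ∈ F, δ) ∈ AddSubmonoid.closure (Δ : Set V) :=
      AddSubmonoid.sum_mem _ fun δ hδ => hposcl δ (hFpos δ hδ)
    have hσ0 : (∑ δ ∈ F, δ) ≠ 0 := by
      intro hzero
      have hsplit : δ₀ + ∑ δ ∈ F.erase δ₀, δ = 0 := by
        have h5 := Finset.add_sum_erase F (fun δ => δ) hδ₀
        simpa using h5.trans hzero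
      have h4 : -δ₀ = ∑ δ ∈ F.erase δ₀, δ := neg_eq_iff_add_eq_zero.mpr hsplit
      have hneg : -δ₀ ∈ AddSubmonoid.closure (Δ : Set V) := by
        rw [h4]
        exact AddSubmonoid.sum_mem _ fun δ hδ =>
          hposcl δ (hFpos δ (Finset.erase_subset _ _ hδ))
      have : δ₀ = 0 := mem_closure_neg_mem Δ hΔind (hposcl δ₀ (hFpos δ₀ hδ₀)) hneg
      exact h0 (this ▸ hposΦ δ₀ (hFpos δ₀ hδ₀))
    obtain ⟨γ, hγΔ, hγinner⟩ := closure_inner_pos Δ hσcl hσ0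
    have hγΦ : γ ∈ Φ := hΔΦ hγΔ
    have hγ0 : γ ≠ 0 := fun h => h0 (h ▸ hγΦ)
    have hintσ : ∃ z : ℤ, cpair γ (∑ δ ∈ F, δ) = z := by
      rw [show cpair γ (∑ δ ∈ F, δ) = ∑ δ ∈ F, cpair γ δ from cpair_sum γ F id]
      choose zf hzf using fun (δ : V) (hδ : δ ∈ F) =>
        hint γ hγΦ δ (hposΦ δ (hFpos δ hδ))
      refine ⟨∑ δ ∈ F.attach, zf δ.1 δ.2, ?_⟩
      push_cast
      rw [← Finset.sum_attach F (fun δ => cpair γ δ)]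
      exact Finset.sum_congr rfl fun δ _ => hzf δ.1 δ.2
    obtain ⟨z, hz⟩ := hintσ
    have hpos : 0 < cpair γ (∑ δ ∈ F, δ) := by
      rw [cpair]
      apply div_pos
      · linarith [hγinner]
      · exact lt_of_le_of_ne real_inner_self_nonneg
          (Ne.symm ((inner_self_ne_zero (𝕜 := ℝ)).mpr hγ0))
    have hge1 : 1 ≤ cpair γ (∑ δ ∈ F, δ) := by
      rw [hz] at hpos ⊢
      exact_mod_cast Int.cast_pos.mp hpos
    have hρ1 : cpair γ ρ = 1 :=
      cpair_rho_simple Φ Δ Φpos h0 hrefl hred hΔΦ hΔind hΦpos hΔgen ρ hρ hγΔ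
    have hlamγ : cpair γ lam ≤ 0 := by
      rw [hlamF, cpair_sub, hρ1]
      linarith
    have h1 : 0 ≤ cpair γ lam := hdom γ hγΔ
    have h2 : cpair γ lam ≠ 0 := hregw γ hγΦ
    have : cpair γ lam = 0 := le_antisymm hlamγ h1
    exact h2 this
  have hMempty : M = ∅ := Finset.image_eq_empty.mp hFempty
  constructor
  · rw [hlamF, hFempty]
    simp
  · ext β
    simp only [Finset.coe_sort_coe, Set.mem_setOf_eq, Finset.mem_coe]
    constructor
    · intro hβE
      have hβpos : β ∈ Φpos := hE hβE
      refine ⟨hβpos, ?_⟩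
      have hnm : β ∉ M := by rw [hMempty]; exact Finset.notMem_empty β
      have hdne : d β ≠ -1 := fun h => hnm (Finset.mem_filter.mpr ⟨hβpos, h⟩)
      have hnp : w⁻¹ β ∉ Φpos := by
        intro hp
        apply hdne
        simp only [hddef, if_pos hp, if_pos hβE]
        norm_num
      rcases hΔgen _ (hWinv β (hposΦ β hβpos)) with h | h
      · exact absurd h hnp
      · exact h
    · rintro ⟨hβpos, hneg⟩
      have hnp : w⁻¹ β ∉ Φpos := fun hp => posneg _ hp hneg
      by_contra hβE
      have hnm : β ∉ M := by rw [hMempty]; exact Finset.notMem_empty β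
      apply hnm
      refine Finset.mem_filter.mpr ⟨hβpos, ?_⟩
      simp only [hddef, if_neg hnp, if_neg hβE]
      norm_num
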